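/- For each of the parameter triples (m₁,m₂,m₃) ∈ {(2,2,0), (3,4,0), (4,4,1), (6,8,1)}, both inequalities hold: B((m₂+m₃)/2+1, m₁+1) > (m₂+2m₃)/(2m₁+m₂+2m₃)·B((m₂+m₃+1)/2, m₁+1) and B(m₁/2+1, m₂+m₃+1) > m₁/(m₁+m₂+2m₃)·B((m₁+1)/2, m₂+m₃+1), where B is the Euler beta function. -/
import Mathlib


/-- The Euler beta function B(a,b) = ∫₀¹ t^{a-1}(1-t)^{b-1} dt. -/
noncomputable def eulerBeta (a b : ℝ) : ℝ :=
  ∫ t in (0:ℝ)..1, t ^ (a - 1) * (1 - t) ^ (b - 1)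

/-- Closed form for the beta integral with natural second argument. -/
lemma eulerBeta_nat_formula (a : ℝ) (ha : 0 < a) (n : ℕ) :
    eulerBeta a ((n : ℝ) + 1) =
      ∑ k ∈ Finset.range (n + 1), (-1 : ℝ) ^ k * (n.choose k : ℝ) / (a + k) := by
  have key : eulerBeta a ((n : ℝ) + 1)
      = ∫ t in (0:ℝ)..1, ∑ k ∈ Finset.range (n + 1),
          ((-1 : ℝ) ^ k * (n.choose k : ℝ)) * t ^ (a - 1 + k) := by
    unfold eulerBeta
    apply intervalIntegral.integral_congr_ae
    filter_upwards with t ht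
    rw [Set.uIoc_of_le (by norm_num : (0:ℝ) ≤ 1)] at ht
    have ht0 : 0 < t := ht.1
    have hexp : (n : ℝ) + 1 - 1 = (n : ℝ) := by ring
    rw [hexp, Real.rpow_natCast]
    have h1t : (1 - t) = -t + 1 := by ring
    rw [h1t, add_pow, Finset.mul_sum]
    refine Finset.sum_congr rfl fun k _ => ?_
    rw [Real.rpow_add ht0, Real.rpow_natCast, neg_pow]
    ring
  rw [key, intervalIntegral.integral_finset_sum]
  · refine Finset.sum_congr rfl fun k _ => ?_
    have hk0 : (0:ℝ) ≤ (k:ℝ) := Nat.cast_nonneg k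
    rw [intervalIntegral.integral_const_mul,
      integral_rpow (Or.inl (by linarith : (-1:ℝ) < a - 1 + k)),
      Real.one_rpow, Real.zero_rpow (by intro hc; nlinarith : a - 1 + (k:ℝ) + 1 ≠ 0)]
    have : a - 1 + (k:ℝ) + 1 = a + k := by ring
    rw [this]; ring
  · intro k hk
    have hk0 : (0:ℝ) ≤ (k:ℝ) := Nat.cast_nonneg k
    exact (intervalIntegral.intervalIntegrable_rpow' (by linarith)).const_mul _

/-- Helper for evaluating concrete beta values. -/
lemma eulerBeta_val (a b v : ℝ) (n : ℕ) (ha : 0 < a) (hb : b = (n:ℝ) + 1)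
    (hv : ∑ k ∈ Finset.range (n + 1), (-1 : ℝ) ^ k * (n.choose k : ℝ) / (a + k) = v) :
    eulerBeta a b = v := by
  rw [hb, eulerBeta_nat_formula a ha n, hv]

/-- Both barycenter conditions hold for the sporadic triples
(m₁,m₂,m₃) ∈ {(2,2,0), (3,4,0), (4,4,1), (6,8,1)}. -/
theorem stmt_19 (m₁ m₂ m₃ : ℝ)
    (h : (m₁, m₂, m₃) ∈ ({(2, 2, 0), (3, 4, 0), (4, 4, 1), (6, 8, 1)} : Set (ℝ × ℝ × ℝ))) :
    (m₂ + 2 * m₃) / (2 * m₁ + m₂ + 2 * m₃) * eulerBeta ((m₂ + m₃ + 1) / 2) (m₁ + 1)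
      < eulerBeta ((m₂ + m₃) / 2 + 1) (m₁ + 1) ∧
    m₁ / (m₁ + m₂ + 2 * m₃) * eulerBeta ((m₁ + 1) / 2) (m₂ + m₃ + 1)
      < eulerBeta (m₁ / 2 + 1) (m₂ + m₃ + 1) := by
  simp only [Set.mem_insert_iff, Set.mem_singleton_iff, Prod.mk.injEq] at h
  obtain ⟨h1,h2,h3⟩|⟨h1,h2,h3⟩|⟨h1,h2,h3⟩|⟨h1,h2,h3⟩ := h <;>
      subst h1 <;> subst h2 <;> subst h3 <;> norm_num
  · rw [eulerBeta_val (3/2) 3 (16/105) 2 (by norm_num) (by norm_num)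
        (by norm_num [Finset.sum_range_succ, Nat.choose]),
      eulerBeta_val 2 3 (1/12) 2 (by norm_num) (by norm_num)
        (by norm_num [Finset.sum_range_succ, Nat.choose])]
    norm_num
  · rw [eulerBeta_val (5/2) 4 (32/1155) 3 (by norm_num) (by norm_num)
        (by norm_num [Finset.sum_range_succ, Nat.choose]),
      eulerBeta_val 3 4 (1/60) 3 (by norm_num) (by norm_num)
        (by norm_num [Finset.sum_range_succ, Nat.choose]),
      eulerBeta_val 2 5 (1/30) 4 (by norm_num) (by norm_num)
        (by norm_num [Finset.sum_range_succ, Nat.choose]),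
      eulerBeta_val (5/2) 5 (256/15015) 4 (by norm_num) (by norm_num)
        (by norm_num [Finset.sum_range_succ, Nat.choose])]
    norm_num
  · rw [eulerBeta_val 3 5 (1/105) 4 (by norm_num) (by norm_num)
        (by norm_num [Finset.sum_range_succ, Nat.choose]),
      eulerBeta_val (7/2) 5 (256/45045) 4 (by norm_num) (by norm_num)
        (by norm_num [Finset.sum_range_succ, Nat.choose]),
      eulerBeta_val (5/2) 6 (512/45045) 5 (by norm_num) (by norm_num)
        (by norm_num [Finset.sum_range_succ, Nat.choose]),
      eulerBeta_val 3 6 (1/168) 5 (by norm_num) (by norm_num)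
        (by norm_num [Finset.sum_range_succ, Nat.choose])]
    norm_num
  · rw [eulerBeta_val 5 7 (1/2310) 6 (by norm_num) (by norm_num)
        (by norm_num [Finset.sum_range_succ, Nat.choose]),
      eulerBeta_val (11/2) 7 (2048/7436429) 6 (by norm_num) (by norm_num)
        (by norm_num [Finset.sum_range_succ, Nat.choose]),
      eulerBeta_val (7/2) 10 (131072/185910725) 9 (by norm_num) (by norm_num)
        (by norm_num [Finset.sum_range_succ, Nat.choose]),
      eulerBeta_val 4 10 (1/2860) 9 (by norm_num) (by norm_num)
        (by norm_num [Finset.sum_range_succ, Nat.choose])]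
    norm_num
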